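/- Under the hypotheses of the concavity proposition, for all δ ≤ δ₀, h = (h₁,h₂) ∈ R^n × R^m, and (x,u) ∈ X × U, the Hessian quadratic form of b(x,u) = w(x + δ f(x,u)) + δ ℓ(x,u) satisfies h* ∇²b(x,u) h ≤ (δC(1+2‖F‖) − β)‖h₁‖² − δα‖h₂‖² + 2δC(1 + ‖G‖ + δ‖F‖‖G‖)‖h₁‖‖h₂‖. -/

import Mathlib

section helpers
variable {E : Type*} [NormedAddCommGroup E] [NormedSpace ℝ E]

lemma update_fin2_zero (a b x : E) : Function.update ![a, b] 0 x = ![x, b] := by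
  ext i; fin_cases i <;> simp
lemma update_fin2_one (a b x : E) : Function.update ![a, b] 1 x = ![a, x] := by
  ext i; fin_cases i <;> simp

lemma m2_add_left (M : ContinuousMultilinearMap ℝ (fun _ : Fin 2 => E) ℝ) (a a' b : E) :
    M ![a + a', b] = M ![a, b] + M ![a', b] := by
  have h := M.map_update_add ![a, b] 0 a a'
  simpa [update_fin2_zero] using h

lemma m2_add_right (M : ContinuousMultilinearMap ℝ (fun _ : Fin 2 => E) ℝ) (a b b' : E) :
    M ![a, b + b'] = M ![a, b] + M ![a, b'] := by
  have h := M.map_update_add ![a, b] 1 b b'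
  simpa [update_fin2_one] using h

lemma m2_smul_left (M : ContinuousMultilinearMap ℝ (fun _ : Fin 2 => E) ℝ) (s : ℝ) (a b : E) :
    M ![s • a, b] = s * M ![a, b] := by
  have h := M.map_update_smul ![a, b] 0 s a
  simpa [update_fin2_zero] using h

lemma m2_smul_right (M : ContinuousMultilinearMap ℝ (fun _ : Fin 2 => E) ℝ) (s : ℝ) (a b : E) :
    M ![a, s • b] = s * M ![a, b] := by
  have h := M.map_update_smul ![a, b] 1 s b
  simpa [update_fin2_one] using h

lemma iteratedFDeriv_two_symm {f : E → ℝ} (hf : ContDiff ℝ 2 f) (x a b : E) :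
    iteratedFDeriv ℝ 2 f x ![a, b] = iteratedFDeriv ℝ 2 f x ![b, a] := by
  rw [iteratedFDeriv_two_apply, iteratedFDeriv_two_apply]
  simpa using (hf.contDiffAt.isSymmSndFDerivAt (by simp [minSmoothness_of_isRCLikeNormedField])) a b

lemma m2_expand_sq (M : ContinuousMultilinearMap ℝ (fun _ : Fin 2 => E) ℝ)
    (hs : ∀ u v, M ![u, v] = M ![v, u]) (a b : E) :
    M ![a + b, a + b] = M ![a, a] + 2 * M ![a, b] + M ![b, b] := by
  rw [m2_add_left, m2_add_right, m2_add_right, hs b a]; ring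

lemma cross_bound {f : E → ℝ} (hf : ContDiff ℝ 2 f) {C : ℝ} (hC : 0 < C)
    (hlow : ∀ v, -C * ‖v‖ ^ 2 ≤ iteratedFDeriv ℝ 2 f x ![v, v])
    (hup : ∀ v, iteratedFDeriv ℝ 2 f x ![v, v] ≤ 0)
    (a b : E) : |iteratedFDeriv ℝ 2 f x ![a, b]| ≤ C * ‖a‖ * ‖b‖ := by
  set M := iteratedFDeriv ℝ 2 f x with hM
  have hs : ∀ u v : E, M ![u, v] = M ![v, u] := fun u v => iteratedFDeriv_two_symm hf x u v
  have key : ∀ u v : E, |M ![u, v]| ≤ C / 2 * (‖u‖ ^ 2 + ‖v‖ ^ 2) := by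
    intro u v
    have e1 := m2_expand_sq M hs u v
    have e2 := m2_expand_sq M hs u (-v)
    have hneg : M ![u, -v] = -M ![u, v] := by
      have := m2_smul_right M (-1) u v
      simpa using this
    have hneg2 : M ![-v, -v] = M ![v, v] := by
      rw [show (-v) = (-1:ℝ) • v by simp, m2_smul_left, m2_smul_right]; ring
    rw [hneg, hneg2] at e2
    have b1 := hup (u + v)
    have b2 := hup (u + -v)
    have b3 := hlow u
    have b4 := hlow v
    rw [abs_le]
    constructor <;> nlinarith [norm_neg v]
  rcases eq_or_ne a 0 with ha | ha
  · have : M ![a, b] = 0 := by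
      subst ha
      exact M.map_coord_zero 0 (by simp)
    rw [this]; simp; positivity
  rcases eq_or_ne b 0 with hb | hb
  · have : M ![a, b] = 0 := by
      subst hb
      exact M.map_coord_zero 1 (by simp)
    rw [this]; simp; positivity
  have hna : (0:ℝ) < ‖a‖ := norm_pos_iff.mpr ha
  have hnb : (0:ℝ) < ‖b‖ := norm_pos_iff.mpr hb
  set a' := ‖a‖⁻¹ • a with ha'
  set b' := ‖b‖⁻¹ • b with hb'
  have hna' : ‖a'‖ = 1 := norm_smul_inv_norm ha
  have hnb' : ‖b'‖ = 1 := norm_smul_inv_norm hb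
  have hval : M ![a', b'] = ‖a‖⁻¹ * (‖b‖⁻¹ * M ![a, b]) := by
    rw [ha', hb', m2_smul_left, m2_smul_right]
  have h1 : |M ![a', b']| ≤ C := by
    have := key a' b'
    rw [hna', hnb'] at this
    norm_num at this
    linarith
  have h2 : M ![a, b] = ‖a‖ * ‖b‖ * M ![a', b'] := by
    rw [hval]; field_simp
  rw [h2, abs_mul, abs_mul, abs_norm, abs_norm]
  have := mul_le_mul_of_nonneg_left h1 (by positivity : (0:ℝ) ≤ ‖a‖ * ‖b‖)
  nlinarith


lemma iteratedFDeriv_two_shift {f : E → ℝ} (hf : ContDiff ℝ 2 f) (c z : E) (mv : Fin 2 → E) :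
    iteratedFDeriv ℝ 2 (fun y => f (y + c)) z mv = iteratedFDeriv ℝ 2 f (z + c) mv := by
  rw [iteratedFDeriv_two_apply, iteratedFDeriv_two_apply]
  have hdiff : Differentiable ℝ f := hf.differentiable (by norm_num)
  have h1 : (fderiv ℝ (fun y => f (y + c))) = fun y => fderiv ℝ f (y + c) := by
    funext y
    have h := ((hdiff (y + c)).hasFDerivAt.comp y ((hasFDerivAt_id y).add_const c))
    have h' := h.fderiv
    simp only [ContinuousLinearMap.comp_id] at h'
    exact h'
  have hd1 : ContDiff ℝ 1 (fderiv ℝ f) := hf.fderiv_right (by norm_num)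
  rw [h1]
  have h2 := (((hd1.differentiable one_ne_zero) (z + c)).hasFDerivAt.comp z
    ((hasFDerivAt_id z).add_const c))
  have h3 : fderiv ℝ (fun y => fderiv ℝ f (y + c)) z = fderiv ℝ (fderiv ℝ f) (z + c) := by
    have h' := h2.fderiv
    simp only [ContinuousLinearMap.comp_id] at h'
    exact h'
  rw [h3]

variable {M : Type*} [NormedAddCommGroup M] [NormedSpace ℝ M]

set_option maxHeartbeats 1000000 in
lemma hessian_estimate_aux
    (w : E → ℝ) (hw : ContDiff ℝ 2 w)
    (ℓ : E × M → ℝ) (hℓ : ContDiff ℝ 2 ℓ)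
    (F : E →L[ℝ] E) (G : M →L[ℝ] E) (g : E)
    (α β C : ℝ) (hC : 0 < C) (hβ' : 0 ≤ β)
    (δ : ℝ) (hδ : 0 ≤ δ) (p : E × M)
    (hwlow : ∀ x v, -C * ‖v‖ ^ 2 ≤ iteratedFDeriv ℝ 2 w x ![v, v])
    (hwup : ∀ x v, iteratedFDeriv ℝ 2 w x ![v, v] ≤ -β * ‖v‖ ^ 2)
    (hℓuu : ∀ hu : M, iteratedFDeriv ℝ 2 ℓ p ![(0, hu), (0, hu)] ≤ -α * ‖hu‖ ^ 2)
    (hℓxx : ∀ hx hy : E, |iteratedFDeriv ℝ 2 ℓ p ![(hx, 0), (hy, 0)]| ≤ C * ‖hx‖ * ‖hy‖)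
    (hℓxu : ∀ (hx : E) (hu : M), |iteratedFDeriv ℝ 2 ℓ p ![(hx, 0), (0, hu)]| ≤ C * ‖hx‖ * ‖hu‖)
    (h : E × M) :
    iteratedFDeriv ℝ 2
        (fun q : E × M => w (q.1 + δ • (F q.1 + G q.2 + g)) + δ * ℓ q) p ![h, h] ≤
      (δ * C * (1 + 2 * ‖F‖) - β) * ‖h.1‖ ^ 2 - δ * α * ‖h.2‖ ^ 2 +
        2 * δ * C * (1 + ‖G‖ + δ * ‖F‖ * ‖G‖) * ‖h.1‖ * ‖h.2‖ := by
  classical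
  set c : E := δ • g with hc
  set L : (E × M) →L[ℝ] E :=
    ContinuousLinearMap.fst ℝ E M +
      δ • (F.comp (ContinuousLinearMap.fst ℝ E M) + G.comp (ContinuousLinearMap.snd ℝ E M))
    with hLdef
  have hLapp : ∀ q : E × M, L q = q.1 + δ • (F q.1 + G q.2) := by
    intro q
    simp [hLdef, ContinuousLinearMap.add_apply, ContinuousLinearMap.smul_apply,
      ContinuousLinearMap.comp_apply]
  have hphi : ∀ q : E × M, q.1 + δ • (F q.1 + G q.2 + g) = L q + c := by
    intro q
    rw [hLapp q, hc]
    module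
  have hw' : ContDiff ℝ 2 (fun y : E => w (y + c)) := by
    exact hw.comp (contDiff_id.add contDiff_const)
  have hwc : ContDiff ℝ 2 ((fun y : E => w (y + c)) ∘ L) := hw'.comp L.contDiff
  have hl' : ContDiff ℝ 2 (δ • ℓ) := by exact hℓ.const_smul δ
  have hffun : (fun q : E × M => w (q.1 + δ • (F q.1 + G q.2 + g)) + δ * ℓ q)
      = fun q => ((fun y : E => w (y + c)) ∘ L) q + (δ • ℓ) q := by
    funext q
    simp only [Function.comp_apply, Pi.smul_apply, smul_eq_mul, hphi q]
  rw [hffun, iteratedFDeriv_add_apply' hwc.contDiffAt hl'.contDiffAt, ContinuousMultilinearMap.add_apply,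
    iteratedFDeriv_const_smul_apply hℓ.contDiffAt, ContinuousMultilinearMap.smul_apply, smul_eq_mul]
  have hcomp : iteratedFDeriv ℝ 2 ((fun y : E => w (y + c)) ∘ L) p ![h, h]
      = iteratedFDeriv ℝ 2 w (L p + c) ![L h, L h] := by
    rw [L.iteratedFDeriv_comp_right hw' p le_rfl,
      ContinuousMultilinearMap.compContinuousLinearMap_apply]
    rw [show (fun i => L (![h, h] i)) = ![L h, L h] by funext i; fin_cases i <;> simp]
    exact iteratedFDeriv_two_shift hw c (L p) _
  rw [hcomp]
  set x₀ := L p + c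
  set Mw := iteratedFDeriv ℝ 2 w x₀ with hMw
  set Ml := iteratedFDeriv ℝ 2 ℓ p with hMl
  have hsw : ∀ u v : E, Mw ![u, v] = Mw ![v, u] := fun u v => iteratedFDeriv_two_symm hw x₀ u v
  have hsl : ∀ u v : E × M, Ml ![u, v] = Ml ![v, u] :=
    fun u v => iteratedFDeriv_two_symm hℓ p u v
  have hwup0 : ∀ v : E, Mw ![v, v] ≤ 0 := by
    intro v
    have := hwup x₀ v
    nlinarith [norm_nonneg v]
  have hwcross : ∀ u v : E, |Mw ![u, v]| ≤ C * ‖u‖ * ‖v‖ :=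
    fun u v => cross_bound hw hC (hwlow x₀) hwup0 u v
  set a : E := h.1 + δ • F h.1 with hadef
  set b : E := δ • G h.2 with hbdef
  have hLh : L h = a + b := by
    rw [hLapp h, hadef, hbdef]
    module
  have ew : Mw ![L h, L h] = Mw ![h.1, h.1] + 2 * (δ * Mw ![h.1, F h.1])
      + δ * (δ * Mw ![F h.1, F h.1]) + 2 * Mw ![a, b] + Mw ![b, b] := by
    rw [hLh, m2_expand_sq Mw hsw a b, hadef,
      m2_expand_sq Mw hsw h.1 (δ • F h.1), m2_smul_right, m2_smul_left, m2_smul_right]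
  have hsplit : ((h.1, (0 : M)) + ((0 : E), h.2) : E × M) = h := by
    ext <;> simp
  have el : Ml ![h, h] = Ml ![(h.1, 0), (h.1, 0)] + 2 * Ml ![(h.1, 0), (0, h.2)]
      + Ml ![(0, h.2), (0, h.2)] := by
    conv_lhs => rw [← hsplit]
    rw [m2_expand_sq Ml hsl]
  rw [ew, el]
  have f1 : Mw ![h.1, h.1] ≤ -β * ‖h.1‖ ^ 2 := hwup x₀ h.1
  have f2 : Mw ![h.1, F h.1] ≤ C * ‖F‖ * ‖h.1‖ ^ 2 := by
    have h0 := (le_abs_self _).trans (hwcross h.1 (F h.1))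
    have h1 := F.le_opNorm h.1
    have h2 := mul_le_mul_of_nonneg_left h1 (mul_nonneg hC.le (norm_nonneg h.1))
    nlinarith [h0, h2]
  have f3 : Mw ![F h.1, F h.1] ≤ 0 := hwup0 _
  have f5 : Mw ![b, b] ≤ 0 := hwup0 _
  have hna : ‖a‖ ≤ ‖h.1‖ + δ * ‖F‖ * ‖h.1‖ := by
    refine (norm_add_le _ _).trans ?_
    have : ‖δ • F h.1‖ ≤ δ * ‖F‖ * ‖h.1‖ := by
      rw [norm_smul, Real.norm_eq_abs, abs_of_nonneg hδ, mul_assoc]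
      exact mul_le_mul_of_nonneg_left (F.le_opNorm h.1) hδ
    linarith
  have hnb : ‖b‖ ≤ δ * ‖G‖ * ‖h.2‖ := by
    rw [hbdef, norm_smul, Real.norm_eq_abs, abs_of_nonneg hδ, mul_assoc]
    exact mul_le_mul_of_nonneg_left (G.le_opNorm h.2) hδ
  have f4 : Mw ![a, b] ≤ C * ((‖h.1‖ + δ * ‖F‖ * ‖h.1‖) * (δ * ‖G‖ * ‖h.2‖)) := by
    have h0 := (le_abs_self _).trans (hwcross a b)
    have hAB : ‖a‖ * ‖b‖ ≤ (‖h.1‖ + δ * ‖F‖ * ‖h.1‖) * (δ * ‖G‖ * ‖h.2‖) :=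
      mul_le_mul hna hnb (norm_nonneg b) (by positivity)
    have h2 := mul_le_mul_of_nonneg_left hAB hC.le
    nlinarith [h0, h2]
  have f6 : Ml ![(h.1, 0), (h.1, 0)] ≤ C * ‖h.1‖ * ‖h.1‖ :=
    (le_abs_self _).trans (hℓxx h.1 h.1)
  have f7 : Ml ![(h.1, 0), (0, h.2)] ≤ C * ‖h.1‖ * ‖h.2‖ :=
    (le_abs_self _).trans (hℓxu h.1 h.2)
  have f8 : Ml ![(0, h.2), (0, h.2)] ≤ -α * ‖h.2‖ ^ 2 := hℓuu h.2
  have g2 : 2 * (δ * Mw ![h.1, F h.1]) ≤ 2 * (δ * (C * ‖F‖ * ‖h.1‖ ^ 2)) := by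
    have := mul_le_mul_of_nonneg_left f2 hδ
    linarith
  have g3 : δ * (δ * Mw ![F h.1, F h.1]) ≤ 0 := by
    have hh : δ * Mw ![F h.1, F h.1] ≤ 0 := mul_nonpos_of_nonneg_of_nonpos hδ f3
    exact mul_nonpos_of_nonneg_of_nonpos hδ hh
  have g6 : δ * Ml ![(h.1, 0), (h.1, 0)] ≤ δ * (C * ‖h.1‖ * ‖h.1‖) :=
    mul_le_mul_of_nonneg_left f6 hδ
  have g7 : δ * (2 * Ml ![(h.1, 0), (0, h.2)]) ≤ δ * (2 * (C * ‖h.1‖ * ‖h.2‖)) := by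
    have h2 : 2 * Ml ![(h.1, 0), (0, h.2)] ≤ 2 * (C * ‖h.1‖ * ‖h.2‖) := by linarith
    exact mul_le_mul_of_nonneg_left h2 hδ
  have g8 : δ * Ml ![(0, h.2), (0, h.2)] ≤ δ * (-α * ‖h.2‖ ^ 2) :=
    mul_le_mul_of_nonneg_left f8 hδ
  linarith [f1, g2, g3, f4, f5, g6, g7, g8]

end helpers


/-- Hessian estimate in the concavity proof.  With `f(x,u) = F x + G u + g`
affine, `w ∈ C²` satisfying `−C Iₙ ≤ D²w ≤ −β Iₙ`, and `ℓ ∈ C²` with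
`D²_u ℓ ≤ −α I_m`, `‖D²_x ℓ‖ ≤ C`, `‖D²_{xu} ℓ‖ ≤ C` on `X × U`, the
Hessian quadratic form of `b(x,u) = w(x + δ f(x,u)) + δ ℓ(x,u)` satisfies,
for all `δ ≥ 0`, `(x,u) ∈ X × U` and `h = (h₁,h₂)`:
`h* ∇²b(x,u) h ≤ (δ C (1+2‖F‖) − β) ‖h₁‖² − δ α ‖h₂‖²
  + 2 δ C (1 + ‖G‖ + δ ‖F‖ ‖G‖) ‖h₁‖ ‖h₂‖`. -/
theorem hessian_estimate (n m : ℕ)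
    (X : Set (EuclideanSpace ℝ (Fin n))) (U : Set (EuclideanSpace ℝ (Fin m)))
    (w : EuclideanSpace ℝ (Fin n) → ℝ) (hw : ContDiff ℝ 2 w)
    (ℓ : EuclideanSpace ℝ (Fin n) × EuclideanSpace ℝ (Fin m) → ℝ)
    (hℓ : ContDiff ℝ 2 ℓ)
    (F : EuclideanSpace ℝ (Fin n) →L[ℝ] EuclideanSpace ℝ (Fin n))
    (G : EuclideanSpace ℝ (Fin m) →L[ℝ] EuclideanSpace ℝ (Fin n))
    (g : EuclideanSpace ℝ (Fin n))
    (α β C : ℝ) (hα : 0 < α) (hβ : 0 < β) (hC : 0 < C)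
    (hwlow : ∀ x v, -C * ‖v‖ ^ 2 ≤ iteratedFDeriv ℝ 2 w x ![v, v])
    (hwup : ∀ x v, iteratedFDeriv ℝ 2 w x ![v, v] ≤ -β * ‖v‖ ^ 2)
    (hℓuu : ∀ p ∈ X ×ˢ U, ∀ hu,
      iteratedFDeriv ℝ 2 ℓ p ![(0, hu), (0, hu)] ≤ -α * ‖hu‖ ^ 2)
    (hℓxx : ∀ p ∈ X ×ˢ U, ∀ hx hy,
      |iteratedFDeriv ℝ 2 ℓ p ![(hx, 0), (hy, 0)]| ≤ C * ‖hx‖ * ‖hy‖)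
    (hℓxu : ∀ p ∈ X ×ˢ U, ∀ hx hu,
      |iteratedFDeriv ℝ 2 ℓ p ![(hx, 0), (0, hu)]| ≤ C * ‖hx‖ * ‖hu‖)
    (δ : ℝ) (hδ : 0 ≤ δ) :
    ∀ p ∈ X ×ˢ U, ∀ h : EuclideanSpace ℝ (Fin n) × EuclideanSpace ℝ (Fin m),
      iteratedFDeriv ℝ 2
          (fun q : EuclideanSpace ℝ (Fin n) × EuclideanSpace ℝ (Fin m) =>
            w (q.1 + δ • (F q.1 + G q.2 + g)) + δ * ℓ q) p ![h, h] ≤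
        (δ * C * (1 + 2 * ‖F‖) - β) * ‖h.1‖ ^ 2 - δ * α * ‖h.2‖ ^ 2 +
          2 * δ * C * (1 + ‖G‖ + δ * ‖F‖ * ‖G‖) * ‖h.1‖ * ‖h.2‖ := by
  intro p hp h
  exact hessian_estimate_aux w hw ℓ hℓ F G g α β C hC hβ.le δ hδ p hwlow hwup
    (hℓuu p hp) (hℓxx p hp) (hℓxu p hp) h
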